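/- Let α ∈ (2,4), let u_h → u strongly in L²(Ω; ℝ^d) with u_h, u bounded in L^α(Ω; ℝ^d), let K⁻¹ ∈ L^{α/(α−2)}(Ω), and let v_h → v strongly in L^{2α/(4−α)}(Ω; ℝ^d). Then ∫_Ω (A(u_h) − A(u)) · v_h dx → 0 as h → 0, where A(w) = (μ/ρ)K⁻¹w + (β/ρ)|w|^{α−2}w. -/

import Mathlib

open MeasureTheory ENNReal Real Filter Topology
open scoped RealInnerProductSpace NNReal

lemma rpow_sub_rpow_mul_le {t x y : ℝ} (ht : 0 < t) (ht2 : t ≤ 2)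
    (hy : 0 ≤ y) (hxy : y ≤ x) : (x ^ t - y ^ t) * y ≤ 2 * x ^ t * (x - y) := by
  rcases eq_or_lt_of_le (hy.trans hxy) with hx0 | hx0
  · rw [← hx0] at hxy ⊢
    have hy0 : y = 0 := le_antisymm hxy hy
    rw [hy0]
    simp [Real.zero_rpow ht.ne']
  set s := y / x with hs
  have hs0 : 0 ≤ s := div_nonneg hy hx0.le
  have hs1 : s ≤ 1 := div_le_one_of_le₀ hxy hx0.le
  have hyx : y = s * x := by rw [hs, div_mul_cancel₀ _ hx0.ne']
  have hst : s * s ≤ s ^ t := by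
    rcases eq_or_lt_of_le hs0 with h | h
    · rw [← h, Real.zero_rpow ht.ne']; nlinarith
    · calc s * s = s ^ (2:ℝ) := by
            rw [show (2:ℝ) = ((2:ℕ):ℝ) by norm_num, Real.rpow_natCast]; ring
        _ ≤ s ^ t := Real.rpow_le_rpow_of_exponent_ge h hs1 ht2
  have hst1 : s ^ t ≤ 1 := Real.rpow_le_one hs0 hs1 ht.le
  have hyt : y ^ t = s ^ t * x ^ t := by rw [hyx, Real.mul_rpow hs0 hx0.le]
  have hxt : 0 ≤ x ^ t := Real.rpow_nonneg hx0.le t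
  calc (x ^ t - y ^ t) * y = x ^ t * ((1 - s ^ t) * s) * x := by rw [hyt, hyx]; ring
    _ ≤ x ^ t * (2 * (1 - s)) * x := by
        apply mul_le_mul_of_nonneg_right (mul_le_mul_of_nonneg_left ?_ hxt) hx0.le
        nlinarith
    _ = 2 * x ^ t * (x - y) := by rw [hyx]; ring

lemma nonlin_aux {E : Type*} [NormedAddCommGroup E] [NormedSpace ℝ E] {t : ℝ}
    (ht : 0 < t) (ht2 : t ≤ 2) {a b : E} (hba : ‖b‖ ≤ ‖a‖) :
    ‖‖a‖ ^ t • a - ‖b‖ ^ t • b‖ ≤ 3 * (‖a‖ ^ t + ‖b‖ ^ t) * ‖a - b‖ := by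
  have key : (‖a‖ ^ t - ‖b‖ ^ t) * ‖b‖ ≤ 2 * ‖a‖ ^ t * (‖a‖ - ‖b‖) :=
    rpow_sub_rpow_mul_le ht ht2 (norm_nonneg b) hba
  have h1 : ‖a‖ ^ t • a - ‖b‖ ^ t • b = ‖a‖ ^ t • (a - b) + (‖a‖ ^ t - ‖b‖ ^ t) • b := by
    rw [smul_sub, sub_smul]; abel
  have hat : 0 ≤ ‖a‖ ^ t := Real.rpow_nonneg (norm_nonneg a) t
  have hbt : 0 ≤ ‖b‖ ^ t := Real.rpow_nonneg (norm_nonneg b) t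
  have htt : ‖b‖ ^ t ≤ ‖a‖ ^ t := Real.rpow_le_rpow (norm_nonneg b) hba ht.le
  have hsub : ‖a‖ - ‖b‖ ≤ ‖a - b‖ := norm_sub_norm_le a b
  calc ‖‖a‖ ^ t • a - ‖b‖ ^ t • b‖
      ≤ ‖‖a‖ ^ t • (a - b)‖ + ‖(‖a‖ ^ t - ‖b‖ ^ t) • b‖ := by rw [h1]; exact norm_add_le _ _
    _ = ‖a‖ ^ t * ‖a - b‖ + (‖a‖ ^ t - ‖b‖ ^ t) * ‖b‖ := by
        rw [norm_smul, norm_smul, Real.norm_eq_abs, Real.norm_eq_abs,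
          abs_of_nonneg hat, abs_of_nonneg (by linarith)]
    _ ≤ ‖a‖ ^ t * ‖a - b‖ + 2 * ‖a‖ ^ t * (‖a‖ - ‖b‖) := by linarith
    _ ≤ 3 * (‖a‖ ^ t + ‖b‖ ^ t) * ‖a - b‖ := by
        nlinarith [mul_le_mul_of_nonneg_left hsub (by positivity : (0:ℝ) ≤ 2 * ‖a‖ ^ t),
          mul_nonneg hbt (norm_nonneg (a - b)), mul_nonneg hat (norm_nonneg (a - b))]

lemma nonlin_est {E : Type*} [NormedAddCommGroup E] [NormedSpace ℝ E] {t : ℝ}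
    (ht : 0 < t) (ht2 : t ≤ 2) (a b : E) :
    ‖‖a‖ ^ t • a - ‖b‖ ^ t • b‖ ≤ 3 * (‖a‖ ^ t + ‖b‖ ^ t) * ‖a - b‖ := by
  rcases le_total ‖b‖ ‖a‖ with h | h
  · exact nonlin_aux ht ht2 h
  · have := nonlin_aux ht ht2 h
    rw [norm_sub_rev, norm_sub_rev b a] at this
    linarith

/-- For `α ∈ (2,4)`, if `u_h → u` strongly in `L²(Ω;ℝ^d)` with `u_h, u` bounded in
`L^α(Ω;ℝ^d)`, `K⁻¹ ∈ L^{α/(α−2)}(Ω)`, and `v_h → v` strongly in `L^{2α/(4−α)}(Ω;ℝ^d)`,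
then `∫_Ω (A(u_h) − A(u)) · v_h dx → 0`, where `A(w) = (μ/ρ)K⁻¹w + (β/ρ)|w|^{α−2}w`. -/
theorem convergence_nonlinear_term
    {d : ℕ} {X : Type*} [MeasurableSpace X] (vol : Measure X)
    (α μ ρ β : ℝ) (hα1 : 2 < α) (hα2 : α < 4) (hμ : 0 < μ) (hρ : 0 < ρ) (hβ : 0 < β)
    (Kinv : X → EuclideanSpace ℝ (Fin d) →L[ℝ] EuclideanSpace ℝ (Fin d))
    (hK : MemLp (fun x => ‖Kinv x‖) (ENNReal.ofReal (α / (α - 2))) vol)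
    (u : ℕ → X → EuclideanSpace ℝ (Fin d)) (ul : X → EuclideanSpace ℝ (Fin d))
    (v : ℕ → X → EuclideanSpace ℝ (Fin d)) (vl : X → EuclideanSpace ℝ (Fin d))
    (hum : ∀ n, MemLp (u n) (ENNReal.ofReal α) vol)
    (hulm : MemLp ul (ENNReal.ofReal α) vol)
    (hvm : ∀ n, MemLp (v n) (ENNReal.ofReal (2 * α / (4 - α))) vol)
    (hvlm : MemLp vl (ENNReal.ofReal (2 * α / (4 - α))) vol)
    (huL2 : Tendsto (fun n => eLpNorm (fun x => u n x - ul x) 2 vol) atTop (nhds 0))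
    (hbound : ∃ B : ℝ≥0∞, B ≠ ⊤ ∧ (∀ n, eLpNorm (u n) (ENNReal.ofReal α) vol ≤ B) ∧
      eLpNorm ul (ENNReal.ofReal α) vol ≤ B)
    (hvconv : Tendsto (fun n => eLpNorm (fun x => v n x - vl x)
        (ENNReal.ofReal (2 * α / (4 - α))) vol) atTop (nhds 0)) :
    Tendsto (fun n => ∫ x,
        ⟪((μ / ρ) • Kinv x (u n x) + (β / ρ) • ‖u n x‖ ^ (α - 2) • u n x) -
          ((μ / ρ) • Kinv x (ul x) + (β / ρ) • ‖ul x‖ ^ (α - 2) • ul x),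
          v n x⟫ ∂vol) atTop (nhds 0) := by
  obtain ⟨B, hB, hBu, hBl⟩ := hbound
  have ht : 0 < α - 2 := by linarith
  have ht2 : α - 2 ≤ 2 := by linarith
  have hα0 : 0 < α := by linarith
  have h4α : 0 < 4 - α := by linarith
  have h3α : 0 < 3 * α - 4 := by linarith
  have hμρ : 0 < μ / ρ := div_pos hμ hρ
  have hβρ : 0 < β / ρ := div_pos hβ hρ
  set P := ENNReal.ofReal (α / (α - 2)) with hP
  set Q := ENNReal.ofReal (2 * α / (4 - α)) with hQ
  set S := ENNReal.ofReal (2 * α / (3 * α - 4)) with hS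
  -- exponent identities
  have hSQ : (1 : ℝ≥0∞) / 1 = 1 / S + 1 / Q := by
    rw [hS, hQ, one_div, one_div, one_div, ← ENNReal.ofReal_inv_of_pos (by positivity),
      ← ENNReal.ofReal_inv_of_pos (by positivity),
      ← ENNReal.ofReal_add (by positivity) (by positivity), inv_one,
      ← ENNReal.ofReal_one]
    congr 1
    rw [inv_div, inv_div]
    field_simp
    ring
  have hPS : 1 / S = 1 / P + 1 / 2 := by
    rw [hS, hP, one_div, one_div, ← ENNReal.ofReal_inv_of_pos (by positivity),
      ← ENNReal.ofReal_inv_of_pos (by positivity),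
      show (2 : ℝ≥0∞) = ENNReal.ofReal 2 by simp, one_div,
      ← ENNReal.ofReal_inv_of_pos (by norm_num),
      ← ENNReal.ofReal_add (by positivity) (by norm_num)]
    congr 1
    rw [inv_div, inv_div]
    field_simp
    ring
  have h1P : 1 ≤ P := ENNReal.one_le_ofReal.2 (by rw [le_div_iff₀ ht]; linarith)
  have h1Q : 1 ≤ Q := ENNReal.one_le_ofReal.2 (by rw [le_div_iff₀ h4α]; linarith)
  -- the majorant
  set g : ℕ → X → ℝ := fun n x =>
    (μ / ρ) * ‖Kinv x‖ + (3 * (β / ρ)) * (‖u n x‖ ^ (α - 2) + ‖ul x‖ ^ (α - 2)) with hgdef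
  -- measurability
  have hrc : Continuous fun s : ℝ => s ^ (α - 2) := Real.continuous_rpow_const ht.le
  have hut : ∀ n, AEStronglyMeasurable (fun x => ‖u n x‖ ^ (α - 2)) vol := fun n =>
    hrc.comp_aestronglyMeasurable (hum n).1.norm
  have hult : AEStronglyMeasurable (fun x => ‖ul x‖ ^ (α - 2)) vol :=
    hrc.comp_aestronglyMeasurable hulm.1.norm
  have hgm : ∀ n, AEStronglyMeasurable (g n) vol := fun n =>
    (aestronglyMeasurable_const.mul hK.1).add
      (aestronglyMeasurable_const.mul ((hut n).add hult))
  -- pointwise bound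
  have hptw : ∀ n x,
      ‖⟪((μ / ρ) • Kinv x (u n x) + (β / ρ) • ‖u n x‖ ^ (α - 2) • u n x) -
          ((μ / ρ) • Kinv x (ul x) + (β / ρ) • ‖ul x‖ ^ (α - 2) • ul x), v n x⟫‖ ≤
        (g n x * ‖u n x - ul x‖) * ‖v n x‖ := by
    intro n x
    set a := u n x
    set b := ul x
    have hW : ((μ / ρ) • Kinv x a + (β / ρ) • ‖a‖ ^ (α - 2) • a) -
        ((μ / ρ) • Kinv x b + (β / ρ) • ‖b‖ ^ (α - 2) • b) =
        (μ / ρ) • (Kinv x a - Kinv x b) +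
          (β / ρ) • (‖a‖ ^ (α - 2) • a - ‖b‖ ^ (α - 2) • b) := by
      rw [smul_sub, smul_sub]; abel
    have h1 : ‖Kinv x a - Kinv x b‖ ≤ ‖Kinv x‖ * ‖a - b‖ := by
      rw [← map_sub]; exact (Kinv x).le_opNorm _
    have h2 : ‖‖a‖ ^ (α - 2) • a - ‖b‖ ^ (α - 2) • b‖ ≤
        3 * (‖a‖ ^ (α - 2) + ‖b‖ ^ (α - 2)) * ‖a - b‖ := nonlin_est ht ht2 a b
    refine (norm_inner_le_norm _ _).trans (mul_le_mul_of_nonneg_right ?_ (norm_nonneg _))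
    rw [hW]
    have h3 : ‖(μ / ρ) • (Kinv x a - Kinv x b) +
        (β / ρ) • (‖a‖ ^ (α - 2) • a - ‖b‖ ^ (α - 2) • b)‖ ≤
        (μ / ρ) * ‖Kinv x a - Kinv x b‖ +
          (β / ρ) * ‖‖a‖ ^ (α - 2) • a - ‖b‖ ^ (α - 2) • b‖ := by
      refine (norm_add_le _ _).trans ?_
      rw [norm_smul, norm_smul, Real.norm_eq_abs, abs_of_nonneg hμρ.le,
        Real.norm_eq_abs, abs_of_nonneg hβρ.le]
    have h4 := mul_le_mul_of_nonneg_left h1 hμρ.le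
    have h5 := mul_le_mul_of_nonneg_left h2 hβρ.le
    have hgx : g n x * ‖a - b‖ = (μ / ρ) * (‖Kinv x‖ * ‖a - b‖) +
        (β / ρ) * (3 * (‖a‖ ^ (α - 2) + ‖b‖ ^ (α - 2)) * ‖a - b‖) := by
      simp only [hgdef]; ring
    rw [hgx]
    linarith
  -- key Hölder estimate
  have key : ∀ n, (‖∫ x, ⟪((μ / ρ) • Kinv x (u n x) + (β / ρ) • ‖u n x‖ ^ (α - 2) • u n x) -
          ((μ / ρ) • Kinv x (ul x) + (β / ρ) • ‖ul x‖ ^ (α - 2) • ul x), v n x⟫ ∂vol‖₊ : ℝ≥0∞) ≤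
      eLpNorm (g n) P vol *
        (eLpNorm (fun x => u n x - ul x) 2 vol * eLpNorm (v n) Q vol) := by
    intro n
    refine (enorm_integral_le_lintegral_enorm _).trans ?_
    have step2 : (∫⁻ x, ‖⟪((μ / ρ) • Kinv x (u n x) + (β / ρ) • ‖u n x‖ ^ (α - 2) • u n x) -
          ((μ / ρ) • Kinv x (ul x) + (β / ρ) • ‖ul x‖ ^ (α - 2) • ul x), v n x⟫‖₊ ∂vol) ≤
        eLpNorm (fun x => (g n x * ‖u n x - ul x‖) * ‖v n x‖) 1 vol := by
      rw [eLpNorm_one_eq_lintegral_enorm]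
      refine lintegral_mono fun x => ENNReal.coe_le_coe.2 ?_
      rw [← NNReal.coe_le_coe, coe_nnnorm, coe_nnnorm]
      exact (hptw n x).trans (le_abs_self _)
    refine step2.trans ?_
    have hGU : AEStronglyMeasurable (fun x => g n x * ‖u n x - ul x‖) vol :=
      (hgm n).mul ((hum n).1.sub hulm.1).norm
    have step3 : eLpNorm (fun x => (g n x * ‖u n x - ul x‖) * ‖v n x‖) 1 vol ≤
        eLpNorm (fun x => g n x * ‖u n x - ul x‖) S vol *
          eLpNorm (fun x => ‖v n x‖) Q vol := by
      have h := hSQ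
      simp only [one_div] at h
      haveI : ENNReal.HolderTriple S Q 1 := ⟨h.symm⟩
      simpa using eLpNorm_le_eLpNorm_mul_eLpNorm'_of_norm hGU (hvm n).1.norm (· * ·) 1
        (Eventually.of_forall fun x => by simp [norm_mul])
    have step4 : eLpNorm (fun x => g n x * ‖u n x - ul x‖) S vol ≤
        eLpNorm (g n) P vol * eLpNorm (fun x => ‖u n x - ul x‖) 2 vol := by
      have h := hPS
      simp only [one_div] at h
      haveI : ENNReal.HolderTriple P 2 S := ⟨h.symm⟩
      simpa using eLpNorm_le_eLpNorm_mul_eLpNorm'_of_norm (hgm n) ((hum n).1.sub hulm.1).norm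
        (· * ·) 1 (Eventually.of_forall fun x => by simp [norm_mul])
    calc eLpNorm (fun x => (g n x * ‖u n x - ul x‖) * ‖v n x‖) 1 vol ≤
        eLpNorm (fun x => g n x * ‖u n x - ul x‖) S vol *
          eLpNorm (fun x => ‖v n x‖) Q vol := step3
      _ ≤ (eLpNorm (g n) P vol * eLpNorm (fun x => ‖u n x - ul x‖) 2 vol) *
          eLpNorm (fun x => ‖v n x‖) Q vol := mul_le_mul_left step4 _
      _ = eLpNorm (g n) P vol *
          (eLpNorm (fun x => u n x - ul x) 2 vol * eLpNorm (v n) Q vol) := by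
          rw [eLpNorm_norm, eLpNorm_norm, mul_assoc]
  -- bound eLpNorm (g n) P
  set C : ℝ≥0∞ := ENNReal.ofReal (μ / ρ) * eLpNorm (fun x => ‖Kinv x‖) P vol +
    ENNReal.ofReal (3 * (β / ρ)) * (B ^ (α - 2) + B ^ (α - 2)) with hCdef
  have hPα : P * ENNReal.ofReal (α - 2) = ENNReal.ofReal α := by
    rw [hP, ← ENNReal.ofReal_mul (by positivity)]
    congr 1
    field_simp
  have hrpow : ∀ (w : X → EuclideanSpace ℝ (Fin d)), MemLp w (ENNReal.ofReal α) vol →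
      eLpNorm w (ENNReal.ofReal α) vol ≤ B →
      eLpNorm (fun x => ‖w x‖ ^ (α - 2)) P vol ≤ B ^ (α - 2) := by
    intro w _ hw
    rw [eLpNorm_norm_rpow w ht, hPα]
    exact ENNReal.rpow_le_rpow hw ht.le
  have hgP : ∀ n, eLpNorm (g n) P vol ≤ C := by
    intro n
    have hsplit : g n = (fun x => (μ / ρ) * ‖Kinv x‖) +
        fun x => (3 * (β / ρ)) * (‖u n x‖ ^ (α - 2) + ‖ul x‖ ^ (α - 2)) := rfl
    rw [hsplit]
    have hm1 : AEStronglyMeasurable (fun x => (μ / ρ) * ‖Kinv x‖) vol :=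
      aestronglyMeasurable_const.mul hK.1
    have hm2 : AEStronglyMeasurable
        (fun x => (3 * (β / ρ)) * (‖u n x‖ ^ (α - 2) + ‖ul x‖ ^ (α - 2))) vol :=
      aestronglyMeasurable_const.mul ((hut n).add hult)
    refine (eLpNorm_add_le hm1 hm2 h1P).trans ?_
    have e1 : eLpNorm (fun x => (μ / ρ) * ‖Kinv x‖) P vol =
        (‖(μ / ρ)‖₊ : ℝ≥0∞) * eLpNorm (fun x => ‖Kinv x‖) P vol :=
      eLpNorm_const_smul (μ / ρ) (fun x => ‖Kinv x‖) P vol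
    have e2 : eLpNorm (fun x => (3 * (β / ρ)) * (‖u n x‖ ^ (α - 2) + ‖ul x‖ ^ (α - 2))) P vol =
        (‖(3 * (β / ρ))‖₊ : ℝ≥0∞) *
          eLpNorm (fun x => ‖u n x‖ ^ (α - 2) + ‖ul x‖ ^ (α - 2)) P vol :=
      eLpNorm_const_smul (3 * (β / ρ)) _ P vol
    rw [e1, e2, ← enorm_eq_nnnorm, ← enorm_eq_nnnorm, Real.enorm_eq_ofReal hμρ.le, Real.enorm_eq_ofReal (by positivity)]
    refine add_le_add le_rfl (mul_le_mul_right ?_ _)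
    have hsum : (fun x => ‖u n x‖ ^ (α - 2) + ‖ul x‖ ^ (α - 2)) =
        (fun x => ‖u n x‖ ^ (α - 2)) + fun x => ‖ul x‖ ^ (α - 2) := rfl
    rw [hsum]
    refine (eLpNorm_add_le (hut n) hult h1P).trans ?_
    exact add_le_add (hrpow _ (hum n) (hBu n)) (hrpow _ hulm hBl)
  have hC : C ≠ ⊤ := by
    apply ENNReal.add_ne_top.2
    constructor
    · exact ENNReal.mul_ne_top ENNReal.ofReal_ne_top hK.2.ne
    · exact ENNReal.mul_ne_top ENNReal.ofReal_ne_top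
        (ENNReal.add_ne_top.2 ⟨ENNReal.rpow_ne_top_of_nonneg ht.le hB,
          ENNReal.rpow_ne_top_of_nonneg ht.le hB⟩)
  -- bound on eLpNorm (v n)
  have hvnb : ∀ n, eLpNorm (v n) Q vol ≤
      eLpNorm (fun x => v n x - vl x) Q vol + eLpNorm vl Q vol := by
    intro n
    have hvsplit : v n = (fun x => v n x - vl x) + vl := by funext x; simp
    nth_rewrite 1 [hvsplit]
    exact eLpNorm_add_le ((hvm n).1.sub hvlm.1) hvlm.1 h1Q
  -- final bound
  have hbnd : ∀ n, (‖∫ x, ⟪((μ / ρ) • Kinv x (u n x) + (β / ρ) • ‖u n x‖ ^ (α - 2) • u n x) -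
          ((μ / ρ) • Kinv x (ul x) + (β / ρ) • ‖ul x‖ ^ (α - 2) • ul x), v n x⟫ ∂vol‖₊ : ℝ≥0∞) ≤
      C * (eLpNorm (fun x => u n x - ul x) 2 vol *
        (eLpNorm (fun x => v n x - vl x) Q vol + eLpNorm vl Q vol)) := fun n =>
    (key n).trans (mul_le_mul' (hgP n) (mul_le_mul' le_rfl (hvnb n)))
  have hL : eLpNorm vl Q vol ≠ ⊤ := hvlm.2.ne
  have hlim : Tendsto (fun n => C * (eLpNorm (fun x => u n x - ul x) 2 vol *
      (eLpNorm (fun x => v n x - vl x) Q vol + eLpNorm vl Q vol))) atTop (𝓝 0) := by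
    have h2 : Tendsto (fun n => eLpNorm (fun x => v n x - vl x) Q vol + eLpNorm vl Q vol)
        atTop (𝓝 (0 + eLpNorm vl Q vol)) := hvconv.add tendsto_const_nhds
    have h3 : Tendsto (fun n => eLpNorm (fun x => u n x - ul x) 2 vol *
        (eLpNorm (fun x => v n x - vl x) Q vol + eLpNorm vl Q vol)) atTop
        (𝓝 (0 * (0 + eLpNorm vl Q vol))) :=
      ENNReal.Tendsto.mul huL2 (Or.inr (by simp [hL])) h2 (Or.inr (by simp))
    have h4 := ENNReal.Tendsto.const_mul (a := C) h3 (Or.inr hC)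
    simpa using h4
  have hcoe : Tendsto (fun n => ((‖∫ x,
      ⟪((μ / ρ) • Kinv x (u n x) + (β / ρ) • ‖u n x‖ ^ (α - 2) • u n x) -
        ((μ / ρ) • Kinv x (ul x) + (β / ρ) • ‖ul x‖ ^ (α - 2) • ul x),
        v n x⟫ ∂vol‖₊ : ℝ≥0) : ℝ≥0∞)) atTop (𝓝 0) :=
    tendsto_of_tendsto_of_tendsto_of_le_of_le tendsto_const_nhds hlim
      (fun n => zero_le) hbnd
  rw [← ENNReal.coe_zero, ENNReal.tendsto_coe] at hcoe
  rw [tendsto_zero_iff_norm_tendsto_zero]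
  have h5 := (NNReal.tendsto_coe (f := atTop)).2 hcoe
  simpa using h5
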